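/- Let B be an R-bilinear antisymmetric biderivation of D with values in I(P,R). Then for all x ≤ y and u ≤ v in P there exists λ ∈ R such that B(e_{xy}, e_{uv}) = λ·[e_{xy}, e_{uv}]. -/

import Mathlib

/-- The element `e_{xy}` of the incidence algebra: value `1` at `(x, y)` and `0` elsewhere. -/
def esingle (R : Type*) {P : Type*} [CommRing R] [PartialOrder P] [DecidableEq P]
    {x y : P} (_h : x ≤ y) : IncidenceAlgebra R P :=
  ⟨fun u v => if u = x ∧ v = y then 1 else 0, fun u v huv => by
    try dsimp only
    split_ifs with h'
    · obtain ⟨rfl, rfl⟩ := h'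
      exact absurd _h huv
    · rfl⟩

set_option linter.unusedSectionVars false

section Aux
variable {R P : Type*} [CommRing R] [PartialOrder P] [LocallyFiniteOrder P] [DecidableEq P]

@[simp] lemma esingle_apply {x y : P} (h : x ≤ y) (a b : P) :
    esingle R h a b = if a = x ∧ b = y then 1 else 0 := rfl

lemma ia_congr {f g : IncidenceAlgebra R P} (h : f = g) (a b : P) : f a b = g a b := by rw [h]

lemma mul_esingle_apply (g : IncidenceAlgebra R P) {x y : P} (hxy : x ≤ y) (a b : P) :
    (g * esingle R hxy) a b = if b = y then g a x else 0 := by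
  rw [IncidenceAlgebra.mul_apply]
  have h1 : ∀ z ∈ Finset.Icc a b, g a z * esingle R hxy z b
      = if z = x then (if b = y then g a x else 0) else 0 := by
    intro z hz
    rw [esingle_apply]
    by_cases h2 : z = x
    · subst h2
      by_cases h3 : b = y <;> simp [h3]
    · simp [h2]
  rw [Finset.sum_congr rfl h1, Finset.sum_ite_eq' (Finset.Icc a b) x]
  by_cases hx : x ∈ Finset.Icc a b
  · rw [if_pos hx]
  · rw [if_neg hx]
    by_cases h3 : b = y
    · subst h3
      rw [Finset.mem_Icc, not_and_or] at hx
      rcases hx with hx | hx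
      · rw [if_pos rfl, IncidenceAlgebra.apply_eq_zero_of_not_le hx]
      · exact absurd hxy hx
    · rw [if_neg h3]

lemma esingle_mul_apply (g : IncidenceAlgebra R P) {x y : P} (hxy : x ≤ y) (a b : P) :
    (esingle R hxy * g) a b = if a = x then g y b else 0 := by
  rw [IncidenceAlgebra.mul_apply]
  have h1 : ∀ z ∈ Finset.Icc a b, esingle R hxy a z * g z b
      = if z = y then (if a = x then g y b else 0) else 0 := by
    intro z hz
    rw [esingle_apply]
    by_cases h2 : z = y
    · subst h2
      by_cases h3 : a = x <;> simp [h3]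
    · simp [h2, and_comm]
  rw [Finset.sum_congr rfl h1, Finset.sum_ite_eq' (Finset.Icc a b) y]
  by_cases hy : y ∈ Finset.Icc a b
  · rw [if_pos hy]
  · rw [if_neg hy]
    by_cases h3 : a = x
    · subst h3
      rw [Finset.mem_Icc, not_and_or] at hy
      rcases hy with hy | hy
      · exact absurd hxy hy
      · rw [if_pos rfl, IncidenceAlgebra.apply_eq_zero_of_not_le hy]
    · rw [if_neg h3]

lemma dm1 {w x y : P} (hw : w ≠ x) (hxy : x ≤ y) :
    esingle R (le_refl w) * esingle R hxy = 0 := by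
  ext a b hab
  rw [esingle_mul_apply, IncidenceAlgebra.zero_apply]
  by_cases h : a = w
  · subst h; simp [hw]
  · simp [h]

lemma dm2 {x y : P} (hxy : x ≤ y) :
    esingle R (le_refl x) * esingle R hxy = esingle R hxy := by
  ext a b hab
  rw [esingle_mul_apply, esingle_apply]
  by_cases h : a = x <;> simp [h]

lemma md1 {w x y : P} (hw : w ≠ y) (hxy : x ≤ y) :
    esingle R hxy * esingle R (le_refl w) = 0 := by
  ext a b hab
  rw [mul_esingle_apply, IncidenceAlgebra.zero_apply]
  by_cases h : b = w
  · subst h; simp [hw]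
  · simp [h]

lemma md2 {x y : P} (hxy : x ≤ y) :
    esingle R hxy * esingle R (le_refl y) = esingle R hxy := by
  ext a b hab
  rw [mul_esingle_apply, esingle_apply]
  by_cases h : b = y <;> simp [h]

end Aux

/-- `D`: the `R`-span of the elements `e_{xy}`, `x ≤ y`, i.e. the finitely supported elements of
the incidence algebra. -/
def Dspan (R P : Type*) [CommRing R] [PartialOrder P] [DecidableEq P] :
    Submodule R (IncidenceAlgebra R P) :=
  Submodule.span R {f : IncidenceAlgebra R P | ∃ (x y : P) (h : x ≤ y), f = esingle R h}

/-- If `B` is an `R`-bilinear antisymmetric biderivation of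
`D = span {e_{xy}}` with values in `I(P,R)`, then for all `x ≤ y` and `u ≤ v` there is `λ ∈ R`
with `B(e_{xy}, e_{uv}) = λ • [e_{xy}, e_{uv}]`. -/
theorem bider_on_esingle_eq_smul_commutator
    {R P : Type*} [CommRing R] [PartialOrder P] [LocallyFiniteOrder P] [DecidableEq P]
    (B : IncidenceAlgebra R P → IncidenceAlgebra R P → IncidenceAlgebra R P)
    (hadd_l : ∀ f g h, f ∈ Dspan R P → g ∈ Dspan R P → h ∈ Dspan R P →
      B (f + g) h = B f h + B g h)
    (hadd_r : ∀ f g h, f ∈ Dspan R P → g ∈ Dspan R P → h ∈ Dspan R P →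
      B f (g + h) = B f g + B f h)
    (hsmul_l : ∀ (r : R) (f h), f ∈ Dspan R P → h ∈ Dspan R P → B (r • f) h = r • B f h)
    (hsmul_r : ∀ (r : R) (f h), f ∈ Dspan R P → h ∈ Dspan R P → B f (r • h) = r • B f h)
    (hder_l : ∀ f g h, f ∈ Dspan R P → g ∈ Dspan R P → h ∈ Dspan R P →
      B (f * g) h = B f h * g + f * B g h)
    (hder_r : ∀ f g h, f ∈ Dspan R P → g ∈ Dspan R P → h ∈ Dspan R P →
      B f (g * h) = B f g * h + g * B f h)
    (hanti : ∀ f, f ∈ Dspan R P → B f f = 0)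
    {x y u v : P} (hxy : x ≤ y) (huv : u ≤ v) :
    ∃ lb : R, B (esingle R hxy) (esingle R huv) =
      lb • (esingle R hxy * esingle R huv - esingle R huv * esingle R hxy) := by
  classical
  have mem : ∀ {p q : P} (h : p ≤ q), esingle R h ∈ Dspan R P :=
    fun {p q} h => Submodule.subset_span ⟨p, q, h, rfl⟩
  have memw : ∀ w : P, esingle R (le_refl w) ∈ Dspan R P := fun w => mem _
  have h0l : ∀ g, g ∈ Dspan R P → B 0 g = 0 := by
    intro g hg
    have h := hsmul_l 0 0 g (Submodule.zero_mem _) hg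
    simpa using h
  have h0r : ∀ g, g ∈ Dspan R P → B g 0 = 0 := by
    intro g hg
    have h := hsmul_r 0 g 0 hg (Submodule.zero_mem _)
    simpa using h
  -- B (e_w) (e_z) = 0
  have hF : ∀ w z : P, B (esingle R (le_refl w)) (esingle R (le_refl z)) = 0 := by
    intro w z
    by_cases hwz : w = z
    · subst hwz; exact hanti _ (memw w)
    · have h1 := hder_l (esingle R (le_refl w)) (esingle R (le_refl z))
        (esingle R (le_refl z)) (memw w) (memw z) (memw z)
      rw [dm1 hwz, h0l _ (memw z), hanti _ (memw z), mul_zero, add_zero] at h1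
      have h2 := hder_l (esingle R (le_refl z)) (esingle R (le_refl w))
        (esingle R (le_refl z)) (memw z) (memw w) (memw z)
      rw [dm1 (Ne.symm hwz), h0l _ (memw z), hanti _ (memw z), zero_mul, zero_add] at h2
      have h3 := hder_r (esingle R (le_refl w)) (esingle R (le_refl z))
        (esingle R (le_refl z)) (memw w) (memw z) (memw z)
      rw [dm2, ← h1, ← h2, add_zero] at h3
      exact h3
  -- support of B (e_a) (esingle huv)
  have hDrow : ∀ a : P, B (esingle R (le_refl a)) (esingle R huv)
      = esingle R (le_refl u) * B (esingle R (le_refl a)) (esingle R huv) := by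
    intro a
    have h := hder_r (esingle R (le_refl a)) (esingle R (le_refl u)) (esingle R huv)
      (memw a) (memw u) (mem huv)
    rw [dm2, hF a u, zero_mul, zero_add] at h
    exact h
  have hDcol : ∀ a : P, B (esingle R (le_refl a)) (esingle R huv)
      = B (esingle R (le_refl a)) (esingle R huv) * esingle R (le_refl v) := by
    intro a
    have h := hder_r (esingle R (le_refl a)) (esingle R huv) (esingle R (le_refl v))
      (memw a) (mem huv) (memw v)
    rw [md2, hF a v, mul_zero, add_zero] at h
    exact h
  have hDsupp : ∀ a s t : P, ¬(s = u ∧ t = v) →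
      B (esingle R (le_refl a)) (esingle R huv) s t = 0 := by
    intro a s t hst
    by_cases hs : s = u
    · have ht : t ≠ v := fun h => hst ⟨hs, h⟩
      have h := ia_congr (hDcol a) s t
      rw [mul_esingle_apply, if_neg ht] at h
      exact h
    · have h := ia_congr (hDrow a) s t
      rw [esingle_mul_apply, if_neg hs] at h
      exact h
  -- support of B (esingle hxy) (e_b)
  have hErow : ∀ b : P, B (esingle R hxy) (esingle R (le_refl b))
      = esingle R (le_refl x) * B (esingle R hxy) (esingle R (le_refl b)) := by
    intro b
    have h := hder_l (esingle R (le_refl x)) (esingle R hxy) (esingle R (le_refl b))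
      (memw x) (mem hxy) (memw b)
    rw [dm2, hF x b, zero_mul, zero_add] at h
    exact h
  have hEcol : ∀ b : P, B (esingle R hxy) (esingle R (le_refl b))
      = B (esingle R hxy) (esingle R (le_refl b)) * esingle R (le_refl y) := by
    intro b
    have h := hder_l (esingle R hxy) (esingle R (le_refl y)) (esingle R (le_refl b))
      (mem hxy) (memw y) (memw b)
    rw [md2, hF y b, mul_zero, add_zero] at h
    exact h
  have hEsupp : ∀ b s t : P, ¬(s = x ∧ t = y) →
      B (esingle R hxy) (esingle R (le_refl b)) s t = 0 := by
    intro b s t hst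
    by_cases hs : s = x
    · have ht : t ≠ y := fun h => hst ⟨hs, h⟩
      have h := ia_congr (hEcol b) s t
      rw [mul_esingle_apply, if_neg ht] at h
      exact h
    · have h := ia_congr (hErow b) s t
      rw [esingle_mul_apply, if_neg hs] at h
      exact h
  -- kill lemmas
  have K1 : ∀ a b : P, a ≠ x → ¬(a = u ∧ x = v) →
      B (esingle R hxy) (esingle R huv) a b = 0 := by
    intro a b hax h2
    have h := hder_l (esingle R (le_refl a)) (esingle R hxy) (esingle R huv)
      (memw a) (mem hxy) (mem huv)
    rw [dm1 hax, h0l _ (mem huv)] at h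
    have h' := ia_congr h a b
    rw [IncidenceAlgebra.zero_apply, IncidenceAlgebra.add_apply, mul_esingle_apply _ hxy,
      esingle_mul_apply, if_pos rfl, hDsupp a a x h2, ite_self, zero_add] at h'
    exact h'.symm
  have K2 : ∀ a b : P, b ≠ y → ¬(y = u ∧ b = v) →
      B (esingle R hxy) (esingle R huv) a b = 0 := by
    intro a b hby h2
    have h := hder_l (esingle R hxy) (esingle R (le_refl b)) (esingle R huv)
      (mem hxy) (memw b) (mem huv)
    rw [md1 hby, h0l _ (mem huv)] at h
    have h' := ia_congr h a b
    rw [IncidenceAlgebra.zero_apply, IncidenceAlgebra.add_apply, mul_esingle_apply,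
      if_pos rfl, esingle_mul_apply _ hxy, hDsupp b y b h2, ite_self, add_zero] at h'
    exact h'.symm
  have K3 : ∀ a b : P, a ≠ u → ¬(a = x ∧ u = y) →
      B (esingle R hxy) (esingle R huv) a b = 0 := by
    intro a b hau h2
    have h := hder_r (esingle R hxy) (esingle R (le_refl a)) (esingle R huv)
      (mem hxy) (memw a) (mem huv)
    rw [dm1 hau, h0r _ (mem hxy)] at h
    have h' := ia_congr h a b
    rw [IncidenceAlgebra.zero_apply, IncidenceAlgebra.add_apply, mul_esingle_apply _ huv,
      esingle_mul_apply, if_pos rfl, hEsupp a a u h2, ite_self, zero_add] at h'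
    exact h'.symm
  have K4 : ∀ a b : P, b ≠ v → ¬(v = x ∧ b = y) →
      B (esingle R hxy) (esingle R huv) a b = 0 := by
    intro a b hbv h2
    have h := hder_r (esingle R hxy) (esingle R huv) (esingle R (le_refl b))
      (mem hxy) (mem huv) (memw b)
    rw [md1 hbv, h0r _ (mem hxy)] at h
    have h' := ia_congr h a b
    rw [IncidenceAlgebra.zero_apply, IncidenceAlgebra.add_apply, mul_esingle_apply,
      if_pos rfl, esingle_mul_apply _ huv, hEsupp b v b h2, ite_self, add_zero] at h'
    exact h'.symm
  -- main case split
  by_cases hyu : y = u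
  · subst hyu
    by_cases hxv : x = v
    · subst hxv
      have hxy2 : x = y := le_antisymm hxy huv
      subst hxy2
      refine ⟨0, ?_⟩
      rw [zero_smul, show esingle R huv = esingle R hxy from rfl, hanti _ (mem hxy)]
    · refine ⟨B (esingle R hxy) (esingle R huv) x v, ?_⟩
      ext a b hab
      rw [IncidenceAlgebra.constSMul_apply, IncidenceAlgebra.sub_apply,
        mul_esingle_apply _ huv, mul_esingle_apply _ hxy, smul_eq_mul]
      by_cases hax : a = x
      · subst hax
        by_cases hbv : b = v
        · subst hbv
          simp [esingle_apply, hxv]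
        · by_cases hby : b = y
          · subst hby
            rw [K4 _ _ hbv (fun h => hxv h.1.symm)]
            simp [esingle_apply, hbv, hxv]
          · rw [K2 a b hby (fun h => hbv h.2)]
            simp [esingle_apply, hbv, hby]
      · rw [K1 a b hax (fun h => hxv h.2)]
        simp [esingle_apply, hax, hxv]
  · by_cases hxv : x = v
    · subst hxv
      refine ⟨-(B (esingle R hxy) (esingle R huv) u y), ?_⟩
      ext a b hab
      rw [IncidenceAlgebra.constSMul_apply, IncidenceAlgebra.sub_apply,
        mul_esingle_apply _ huv, mul_esingle_apply _ hxy, smul_eq_mul]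
      by_cases hau : a = u
      · subst hau
        by_cases hby : b = y
        · subst hby
          have hab' : a ≠ b := Ne.symm hyu
          simp only [esingle_apply, if_pos rfl]
          rw [if_neg (show ¬(a = x ∧ a = b) from fun h => hab' h.2)]
          by_cases hbx : b = x
          · simp [hbx]
          · simp [hbx]
        · rw [K2 a b hby (fun h => hyu h.1)]
          simp [esingle_apply, hby, Ne.symm hyu]
      · by_cases hby : b = y
        · subst hby
          by_cases hax : a = x
          · subst hax
            rw [K3 a b hau (fun h => hyu h.2.symm)]
            simp [esingle_apply, hau, Ne.symm hyu]
          · rw [K1 a b hax (fun h => hau h.1)]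
            simp [esingle_apply, hax, hau, Ne.symm hyu]
        · rw [K2 a b hby (fun h => hyu h.1)]
          simp [esingle_apply, hby, Ne.symm hyu]
    · refine ⟨0, ?_⟩
      rw [zero_smul]
      ext a b hab
      rw [IncidenceAlgebra.zero_apply]
      by_cases hax : a = x
      · subst hax
        by_cases hby : b = y
        · subst hby
          by_cases hxu : a = u
          · by_cases hyv : b = v
            · subst hxu; subst hyv
              rw [show esingle R huv = esingle R hxy from rfl, hanti _ (mem hxy)]
              rfl
            · exact K4 a b hyv (fun h => hxv h.1.symm)
          · exact K3 a b hxu (fun h => hyu h.2.symm)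
        · exact K2 a b hby (fun h => hyu h.1)
      · exact K1 a b hax (fun h => hxv h.2)
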